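/- (Dai–Yuan sufficient descent) Consider the conjugate gradient iteration in which each t_k satisfies the strong Wolfe conditions at x^k along d^k, and suppose that for every k ≥ 1: β_k ≥ 0 and β_k·(ψ_{x^k}(d^{k−1}) − ψ_{x^{k−1}}(d^{k−1})) ≤ −ψ_{x^k}(v(x^k)) (i.e., β_k is at most the Dai–Yuan parameter β_k^{DY} := −ψ_{x^k}(v(x^k)) / (ψ_{x^k}(d^{k−1}) − ψ_{x^{k−1}}(d^{k−1})), whose denominator is positive). Then for all k ≥ 0, ψ_{x^k}(d^k) ≤ (1/(1+σ))·ψ_{x^k}(v(x^k)) < 0; i.e., the sufficient descent condition holds with c = 1/(1+σ). -/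

import Mathlib

open scoped BigOperators

noncomputable def pd (n : ℕ) (F : EuclideanSpace ℝ (Fin n) → ℝ)
    (x : EuclideanSpace ℝ (Fin n)) (j : Fin n) : ℝ :=
  fderiv ℝ F x (EuclideanSpace.single j (1 : ℝ))

noncomputable def glo (n : ℕ) (F H : EuclideanSpace ℝ (Fin n) → ℝ)
    (x : EuclideanSpace ℝ (Fin n)) (j : Fin n) : ℝ :=
  min (pd n F x j) (pd n H x j)

noncomputable def ghi (n : ℕ) (F H : EuclideanSpace ℝ (Fin n) → ℝ)
    (x : EuclideanSpace ℝ (Fin n)) (j : Fin n) : ℝ :=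
  max (pd n F x j) (pd n H x j)

noncomputable def gloVec (n : ℕ) (F H : EuclideanSpace ℝ (Fin n) → ℝ)
    (x : EuclideanSpace ℝ (Fin n)) : EuclideanSpace ℝ (Fin n) :=
  WithLp.toLp 2 (fun j => glo n F H x j)

noncomputable def ghiVec (n : ℕ) (F H : EuclideanSpace ℝ (Fin n) → ℝ)
    (x : EuclideanSpace ℝ (Fin n)) : EuclideanSpace ℝ (Fin n) :=
  WithLp.toLp 2 (fun j => ghi n F H x j)

noncomputable def psi (m n : ℕ) (Gl Gu : Fin m → EuclideanSpace ℝ (Fin n) → ℝ)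
    (x v : EuclideanSpace ℝ (Fin n)) : ℝ :=
  ⨆ i : Fin m, (1 / 2 : ℝ) *
    ((∑ j : Fin n, (glo n (Gl i) (Gu i) x j + ghi n (Gl i) (Gu i) x j) * v j) +
     (∑ j : Fin n, (ghi n (Gl i) (Gu i) x j - glo n (Gl i) (Gu i) x j) * |v j|))

def LevelSet (m n : ℕ) (Gl Gu : Fin m → EuclideanSpace ℝ (Fin n) → ℝ)
    (x0 : EuclideanSpace ℝ (Fin n)) : Set (EuclideanSpace ℝ (Fin n)) :=
  {x | ∀ i : Fin m, Gl i x ≤ Gl i x0 ∧ Gu i x ≤ Gu i x0}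

def StdWolfe (m n : ℕ) (Gl Gu : Fin m → EuclideanSpace ℝ (Fin n) → ℝ)
    (ρ σ : ℝ) (x d : EuclideanSpace ℝ (Fin n)) (t : ℝ) : Prop :=
  (∀ i : Fin m,
      Gl i (x + t • d) ≤ Gl i x + ρ * t * psi m n Gl Gu x d ∧
      Gu i (x + t • d) ≤ Gu i x + ρ * t * psi m n Gl Gu x d) ∧
  σ * psi m n Gl Gu x d ≤ psi m n Gl Gu (x + t • d) d

def StrongWolfe (m n : ℕ) (Gl Gu : Fin m → EuclideanSpace ℝ (Fin n) → ℝ)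
    (ρ σ : ℝ) (x d : EuclideanSpace ℝ (Fin n)) (t : ℝ) : Prop :=
  (∀ i : Fin m,
      Gl i (x + t • d) ≤ Gl i x + ρ * t * psi m n Gl Gu x d ∧
      Gu i (x + t • d) ≤ Gu i x + ρ * t * psi m n Gl Gu x d) ∧
  |psi m n Gl Gu (x + t • d) d| ≤ σ * |psi m n Gl Gu x d|

def AssumptionA1 (m n : ℕ) (Gl Gu : Fin m → EuclideanSpace ℝ (Fin n) → ℝ)
    (x0 : EuclideanSpace ℝ (Fin n)) : Prop :=
  ∀ i : Fin m, ∃ L : ℝ, 0 < L ∧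
    ∀ y ∈ LevelSet m n Gl Gu x0, ∀ z ∈ LevelSet m n Gl Gu x0,
      ‖gloVec n (Gl i) (Gu i) y - gloVec n (Gl i) (Gu i) z‖ ≤ L * ‖y - z‖ ∧
      ‖ghiVec n (Gl i) (Gu i) y - ghiVec n (Gl i) (Gu i) z‖ ≤ L * ‖y - z‖

def AssumptionA2 (m n : ℕ) (Gl Gu : Fin m → EuclideanSpace ℝ (Fin n) → ℝ)
    (x0 : EuclideanSpace ℝ (Fin n)) : Prop :=
  ∀ y : ℕ → EuclideanSpace ℝ (Fin n),
    (∀ k, y k ∈ LevelSet m n Gl Gu x0) →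
    (∀ (i : Fin m) (k : ℕ), Gl i (y (k+1)) ≤ Gl i (y k) ∧ Gu i (y (k+1)) ≤ Gu i (y k)) →
    ∀ i : Fin m, (∃ Cl : ℝ, ∀ k, Cl ≤ Gl i (y k)) ∧ (∃ Cu : ℝ, ∀ k, Cu ≤ Gu i (y k))

lemma le_psi (m n : ℕ) (Gl Gu : Fin m → EuclideanSpace ℝ (Fin n) → ℝ)
    (x v : EuclideanSpace ℝ (Fin n)) (i : Fin m) :
    (1 / 2 : ℝ) *
    ((∑ j : Fin n, (glo n (Gl i) (Gu i) x j + ghi n (Gl i) (Gu i) x j) * v j) +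
     (∑ j : Fin n, (ghi n (Gl i) (Gu i) x j - glo n (Gl i) (Gu i) x j) * |v j|))
      ≤ psi m n Gl Gu x v := by
  rw [psi]
  apply le_ciSup (Set.Finite.bddAbove (Set.finite_range _)) i

lemma psi_zero (m n : ℕ) (hm : 0 < m) (Gl Gu : Fin m → EuclideanSpace ℝ (Fin n) → ℝ)
    (x : EuclideanSpace ℝ (Fin n)) : psi m n Gl Gu x 0 = 0 := by
  have : Nonempty (Fin m) := ⟨⟨0, hm⟩⟩
  unfold psi
  simp

lemma psi_add_smul_le (m n : ℕ) (hm : 0 < m) (Gl Gu : Fin m → EuclideanSpace ℝ (Fin n) → ℝ)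
    (x u w : EuclideanSpace ℝ (Fin n)) (c : ℝ) (hc : 0 ≤ c) :
    psi m n Gl Gu x (u + c • w) ≤ psi m n Gl Gu x u + c * psi m n Gl Gu x w := by
  have hne : Nonempty (Fin m) := ⟨⟨0, hm⟩⟩
  conv_lhs => rw [psi]
  apply ciSup_le
  intro i
  set A : Fin n → ℝ := fun j => glo n (Gl i) (Gu i) x j + ghi n (Gl i) (Gu i) x j with hA
  set B : Fin n → ℝ := fun j => ghi n (Gl i) (Gu i) x j - glo n (Gl i) (Gu i) x j with hB
  have hBpos : ∀ j, 0 ≤ B j := by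
    intro j
    simp only [hB, ghi, glo, sub_nonneg]
    exact min_le_max
  have happly : ∀ j, (u + c • w) j = u j + c * w j := by
    intro j; rfl
  have hterm : (1 / 2 : ℝ) * ((∑ j, A j * (u + c • w) j) + ∑ j, B j * |(u + c • w) j|)
      ≤ (1 / 2 : ℝ) * ((∑ j, A j * u j) + ∑ j, B j * |u j|)
        + c * ((1 / 2 : ℝ) * ((∑ j, A j * w j) + ∑ j, B j * |w j|)) := by
    have h1 : (∑ j, A j * (u + c • w) j) = (∑ j, A j * u j) + c * ∑ j, A j * w j := by
      simp only [happly]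
      rw [Finset.mul_sum, ← Finset.sum_add_distrib]
      congr 1; ext j; ring
    have h2 : (∑ j, B j * |(u + c • w) j|) ≤ (∑ j, B j * |u j|) + c * ∑ j, B j * |w j| := by
      rw [Finset.mul_sum, ← Finset.sum_add_distrib]
      apply Finset.sum_le_sum
      intro j _
      have habs : |(u + c • w) j| ≤ |u j| + c * |w j| := by
        rw [happly]
        calc |u j + c * w j| ≤ |u j| + |c * w j| := abs_add_le _ _
          _ = |u j| + c * |w j| := by rw [abs_mul, abs_of_nonneg hc]
      calc B j * |(u + c • w) j| ≤ B j * (|u j| + c * |w j|) :=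
            mul_le_mul_of_nonneg_left habs (hBpos j)
        _ = B j * |u j| + c * (B j * |w j|) := by ring
    nlinarith [h1, h2]
  refine le_trans hterm (add_le_add ?_ ?_)
  · exact le_psi m n Gl Gu x u i
  · exact mul_le_mul_of_nonneg_left (le_psi m n Gl Gu x w i) hc

theorem dy_sufficient_descent (m n : ℕ) (hm : 0 < m) (hn : 0 < n)
    (Gl Gu : Fin m → EuclideanSpace ℝ (Fin n) → ℝ)
    (hGl : ∀ i, ContDiff ℝ 1 (Gl i)) (hGu : ∀ i, ContDiff ℝ 1 (Gu i))
    (hle : ∀ (i : Fin m) (x : EuclideanSpace ℝ (Fin n)), Gl i x ≤ Gu i x)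
    (vv : EuclideanSpace ℝ (Fin n) → EuclideanSpace ℝ (Fin n))
    (hvmin : ∀ y w : EuclideanSpace ℝ (Fin n),
      psi m n Gl Gu y (vv y) + (1/2) * ‖vv y‖^2 ≤ psi m n Gl Gu y w + (1/2) * ‖w‖^2)
    (ρ σ : ℝ) (hρ : 0 < ρ) (hρσ : ρ < σ) (hσ : σ < 1)
    (x d : ℕ → EuclideanSpace ℝ (Fin n)) (t : ℕ → ℝ) (β : ℕ → ℝ)
    (hx : ∀ k : ℕ, x (k+1) = x k + t k • d k)
    (ht : ∀ k : ℕ, 0 < t k)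
    (hd0 : d 0 = vv (x 0))
    (hdk : ∀ k : ℕ, d (k+1) = vv (x (k+1)) + β (k+1) • d k)
    (hvne : ∀ k : ℕ, vv (x k) ≠ 0)
    (hw : ∀ k : ℕ, StrongWolfe m n Gl Gu ρ σ (x k) (d k) (t k))
    (hβ : ∀ k : ℕ, 0 ≤ β (k+1) ∧
      β (k+1) * (psi m n Gl Gu (x (k+1)) (d k) - psi m n Gl Gu (x k) (d k))
        ≤ -psi m n Gl Gu (x (k+1)) (vv (x (k+1)))) :
    ∀ k : ℕ, psi m n Gl Gu (x k) (d k) ≤ (1 / (1 + σ)) * psi m n Gl Gu (x k) (vv (x k)) ∧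
      (1 / (1 + σ)) * psi m n Gl Gu (x k) (vv (x k)) < 0 := by
  have hσpos : 0 < σ := lt_trans hρ hρσ
  have hσ0 : (0:ℝ) < 1 + σ := by linarith
  have hψv : ∀ k : ℕ, psi m n Gl Gu (x k) (vv (x k)) < 0 := by
    intro k
    have h := hvmin (x k) 0
    rw [psi_zero m n hm] at h
    simp only [norm_zero] at h
    have hv : 0 < ‖vv (x k)‖ := norm_pos_iff.mpr (hvne k)
    nlinarith
  have hc : (0:ℝ) < 1 / (1 + σ) := by positivity
  intro k
  induction k with
  | zero =>
    refine ⟨?_, mul_neg_of_pos_of_neg hc (hψv 0)⟩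
    rw [hd0]
    have ha := hψv 0
    rw [one_div_mul_eq_div, le_div_iff₀ hσ0]
    nlinarith
  | succ k ih =>
    refine ⟨?_, mul_neg_of_pos_of_neg hc (hψv (k+1))⟩
    obtain ⟨ihp, ihn⟩ := ih
    have hp : psi m n Gl Gu (x k) (d k) < 0 := lt_of_le_of_lt ihp ihn
    have hwk := (hw k).2
    rw [← hx k] at hwk
    obtain ⟨hb0, hbq⟩ := hβ k
    have hsub := psi_add_smul_le m n hm Gl Gu (x (k+1)) (vv (x (k+1))) (d k) (β (k+1)) hb0
    rw [← hdk k] at hsub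
    set a := psi m n Gl Gu (x (k+1)) (vv (x (k+1))) with ha_def
    set p := psi m n Gl Gu (x k) (d k) with hp_def
    set q := psi m n Gl Gu (x (k+1)) (d k) with hq_def
    have ha : a < 0 := hψv (k+1)
    clear_value a p q
    have habs : |q| ≤ σ * (-p) := by rwa [abs_of_neg hp] at hwk
    have hq1 : q ≤ σ * (-p) := le_trans (le_abs_self q) habs
    have hq2 : -(σ * (-p)) ≤ q := neg_le_of_abs_le habs
    refine le_trans hsub ?_
    rw [one_div_mul_eq_div, le_div_iff₀ hσ0]
    clear hsub hwk hψv hvmin hw hβ hx hdk hvne hd0 ht hGl hGu hle ihp ihn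
    rcases le_or_gt q 0 with hq0 | hq0
    · nlinarith [mul_nonneg hb0 (neg_nonneg.mpr hq0), mul_pos hσpos (neg_pos.mpr ha)]
    · have hqp : 0 < q - p := by nlinarith
      have h1 : β (k+1) * q * (q - p) ≤ (-a) * q := by
        have := mul_le_mul_of_nonneg_right hbq (le_of_lt hq0)
        nlinarith [this]
      have h2 : q * (1 + σ) ≤ σ * (q - p) := by linarith
      have h3 : (-a) * (q * (1 + σ)) ≤ (-a) * (σ * (q - p)) :=
        mul_le_mul_of_nonneg_left h2 (by linarith)
      have h4 : (β (k+1) * q * (1 + σ)) * (q - p) ≤ ((-a) * σ) * (q - p) := by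
        have hh := mul_le_mul_of_nonneg_right h1 (le_of_lt hσ0)
        nlinarith [hh, h3]
      have h5 : β (k+1) * q * (1 + σ) ≤ (-a) * σ :=
        (mul_le_mul_iff_of_pos_right hqp).mp h4
      nlinarith [h5]
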